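/- arXiv:2411.01100 — 3 statements merged into one kernel-verified Lean document; each statement's English description precedes it below -/
import Mathlib

section
/- Lemma 1 (Identification of the target mean potential outcome under the exponential-tilting sensitivity model). Suppose Assumptions 1 and 2 hold and the binary exponential-tilting sensitivity model with parameter γ_a ∈ ℝ holds for a given a ∈ {0,1}. Then the expected potential outcome in the target population is identified by the observed-data functional: E[Y⁽ᵃ⁾ | S=0] = E[ e^{γ_a} ρ_a(V) / ( e^{γ_a} ρ_a(V) + 1 − ρ_a(V) ) | S=0 ]. -/
open MeasureTheory ProbabilityTheory Real MeasurableSpace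
open scoped ENNReal

/-- **Lemma 1** (Identification of the target mean potential outcome under the binary
exponential-tilting sensitivity model). -/
theorem lemma1_identification_TATE_sensitivity
    {Ω : Type*} [MeasurableSpace Ω] [StandardBorelSpace Ω] [Nonempty Ω]
    {𝒳 : Type*} [MeasurableSpace 𝒳] [StandardBorelSpace 𝒳]
    {𝒱 : Type*} [MeasurableSpace 𝒱]
    (P : Measure Ω) [IsProbabilityMeasure P]
    -- observed data: source indicator, covariate, treatment, outcome; potential outcomes
    (S A Y Y0 Y1 : Ω → ℝ) (X : Ω → 𝒳) (ψ : 𝒳 → 𝒱)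
    (hS : Measurable S) (hA : Measurable A) (hY : Measurable Y)
    (hY0 : Measurable Y0) (hY1 : Measurable Y1) (hX : Measurable X) (hψ : Measurable ψ)
    (hSbin : ∀ ω, S ω = 0 ∨ S ω = 1) (hAbin : ∀ ω, A ω = 0 ∨ A ω = 1)
    (hY0bin : ∀ ω, Y0 ω = 0 ∨ Y0 ω = 1) (hY1bin : ∀ ω, Y1 ω = 0 ∨ Y1 ω = 1)
    (hPS1pos : 0 < P (S ⁻¹' {1})) (hPS1lt : P (S ⁻¹' {1}) < 1)
    -- the given treatment level a ∈ {0,1} and its potential outcome Y⁽ᵃ⁾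
    (a : ℝ) (ha : a = 0 ∨ a = 1) (Ya : Ω → ℝ)
    (hYa0 : a = 0 → Ya = Y0) (hYa1 : a = 1 → Ya = Y1)
    -- Assumption 1 (SUTVA on the source)
    (hSUTVA : ∀ ω, S ω = 1 → ((A ω = 1 → Y ω = Y1 ω) ∧ (A ω = 0 → Y ω = Y0 ω)))
    -- Assumption 1 (strong ignorability on the source): (Y⁽⁰⁾,Y⁽¹⁾) ⟂ A | X under P(·|S=1)
    (hIgn : CondIndepFun (MeasurableSpace.comap X inferInstance) hX.comap_le
      (fun ω => (Y0 ω, Y1 ω)) A (P[|S ⁻¹' {1}]))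
    -- propensity score π(x) = P(A = 1 | X = x, S = 1) with 0 < π(X) < 1 a.s.
    (pi : 𝒳 → ℝ) (hpi : Measurable pi)
    (hpiver : (fun ω => pi (X ω)) =ᵐ[P[|S ⁻¹' {1}]]
      (P[|S ⁻¹' {1}])[A | MeasurableSpace.comap X inferInstance])
    (hpos : ∀ᵐ ω ∂(P[|S ⁻¹' {1}]), 0 < pi (X ω) ∧ pi (X ω) < 1)
    -- Assumption 2 (positivity of S): P(S=1 | V) > 0 a.s. and P(S=0) > 0
    (hsel : ∀ᵐ ω ∂P, 0 < (P[S | MeasurableSpace.comap (fun ω => ψ (X ω)) inferInstance]) ω)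
    (hPS0pos : 0 < P (S ⁻¹' {0}))
    -- nuisance functions: μ_a(x) = E[Y | X = x, A = a, S = 1]
    (mu : 𝒳 → ℝ) (hmu : Measurable mu)
    (hmuver : (fun ω => mu (X ω)) =ᵐ[P[|S ⁻¹' {1} ∩ A ⁻¹' {a}]]
      (P[|S ⁻¹' {1} ∩ A ⁻¹' {a}])[Y | MeasurableSpace.comap X inferInstance])
    -- ρ_a(v) = E[μ_a(X) | V = v, S = 1]
    (rho : 𝒱 → ℝ) (hrho : Measurable rho)
    (hrhover : (fun ω => rho (ψ (X ω))) =ᵐ[P[|S ⁻¹' {1}]]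
      (P[|S ⁻¹' {1}])[(fun ω => mu (X ω)) | MeasurableSpace.comap (fun ω => ψ (X ω)) inferInstance])
    -- binary exponential-tilting sensitivity model with parameter γ_a:
    -- r_s(v) = P(Y⁽ᵃ⁾ = 1 | V = v, S = s) and r₀(1−r₁) = e^{γ} r₁ (1−r₀) a.e.
    (γ : ℝ) (r0 r1 : 𝒱 → ℝ) (hr0m : Measurable r0) (hr1m : Measurable r1)
    (hr0ver : (fun ω => r0 (ψ (X ω))) =ᵐ[P[|S ⁻¹' {0}]]
      (P[|S ⁻¹' {0}])[Ya | MeasurableSpace.comap (fun ω => ψ (X ω)) inferInstance])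
    (hr1ver : (fun ω => r1 (ψ (X ω))) =ᵐ[P[|S ⁻¹' {1}]]
      (P[|S ⁻¹' {1}])[Ya | MeasurableSpace.comap (fun ω => ψ (X ω)) inferInstance])
    (htilt : ∀ᵐ v ∂(Measure.map (fun ω => ψ (X ω)) P),
      r0 v * (1 - r1 v) = Real.exp γ * (r1 v * (1 - r0 v))) :
    ∫ ω, Ya ω ∂(P[|S ⁻¹' {0}]) =
      ∫ ω, Real.exp γ * rho (ψ (X ω)) /
        (Real.exp γ * rho (ψ (X ω)) + 1 - rho (ψ (X ω))) ∂(P[|S ⁻¹' {0}]) := by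
  -- basic measurable sets and measures
  have hmB1 : MeasurableSet (S ⁻¹' {1}) := hS (measurableSet_singleton 1)
  have hmB0 : MeasurableSet (S ⁻¹' {0}) := hS (measurableSet_singleton 0)
  have hmBa : MeasurableSet (A ⁻¹' {a}) := hA (measurableSet_singleton a)
  set Q1 := P[|S ⁻¹' {1}] with hQ1def
  set Q0 := P[|S ⁻¹' {0}] with hQ0def
  set Qa := P[|S ⁻¹' {1} ∩ A ⁻¹' {a}] with hQadef
  haveI : IsProbabilityMeasure Q1 := cond_isProbabilityMeasure hPS1pos.ne'
  haveI : IsProbabilityMeasure Q0 := cond_isProbabilityMeasure hPS0pos.ne'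
  -- measurability of Ya and its binarity
  have hYam : Measurable Ya := by
    rcases ha with h | h
    · rw [hYa0 h]; exact hY0
    · rw [hYa1 h]; exact hY1
  have hYabin : ∀ ω, Ya ω = 0 ∨ Ya ω = 1 := by
    rcases ha with h | h
    · rw [hYa0 h]; exact hY0bin
    · rw [hYa1 h]; exact hY1bin
  have hmVle : (MeasurableSpace.comap (fun ω => ψ (X ω)) inferInstance) ≤ _ := (hψ.comp hX).comap_le
  have hmVX : (MeasurableSpace.comap (fun ω => ψ (X ω)) inferInstance) ≤ (MeasurableSpace.comap X inferInstance) := by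
    rintro s ⟨t, ht, rfl⟩
    exact ⟨ψ ⁻¹' t, hψ ht, rfl⟩
  -- integrability for bounded measurable functions
  have habs : ∀ {g : Ω → ℝ}, (∀ ω, g ω = 0 ∨ g ω = 1) → ∀ ω, |g ω| ≤ 1 := by
    intro g hg ω
    rcases hg ω with h | h <;> simp [h]
  have hbint : ∀ (μ : Measure Ω), IsFiniteMeasure μ → ∀ (f : Ω → ℝ), Measurable f →
      (∀ᵐ ω ∂μ, |f ω| ≤ 1) → Integrable f μ := by
    intro μ hfin f hf hb
    exact (integrable_const (1 : ℝ)).mono' hf.aestronglyMeasurable (by simpa using hb)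
  -- the transfer of null sets in 𝒱 from Q1 to P (Assumption 2)
  have htransfer : ∀ N : Set 𝒱, MeasurableSet N → Q1 ((fun ω => ψ (X ω)) ⁻¹' N) = 0 →
      P ((fun ω => ψ (X ω)) ⁻¹' N) = 0 := by
    intro N hN h0
    set pre := (fun ω => ψ (X ω)) ⁻¹' N with hpredef
    have hmpre : MeasurableSet pre := (hψ.comp hX) hN
    have hP1 : P (S ⁻¹' {1} ∩ pre) = 0 := by
      rw [hQ1def, cond_apply hmB1] at h0
      rcases mul_eq_zero.mp h0 with h | h
      · exact absurd h (by simp [ENNReal.inv_eq_zero, measure_ne_top])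
      · exact h
    by_contra hpre0
    have hSind : S = (S ⁻¹' {1}).indicator (fun _ => (1 : ℝ)) := by
      funext ω
      rcases hSbin ω with h | h
      · have hω : ω ∉ S ⁻¹' {1} := by simp [Set.mem_preimage, h]
        simp [Set.indicator_of_notMem hω, h]
      · have hω : ω ∈ S ⁻¹' {1} := by simp [Set.mem_preimage, h]
        simp [Set.indicator_of_mem hω, h]
    have hSint : Integrable S P :=
      hbint P inferInstance S hS (Filter.Eventually.of_forall (habs hSbin))
    have h2 : ∫ ω in pre, S ω ∂P = 0 := by
      rw [hSind, setIntegral_indicator hmB1, setIntegral_const]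
      rw [Set.inter_comm, measureReal_def, hP1]
      simp
    have hmpreV : MeasurableSet[(MeasurableSpace.comap (fun ω => ψ (X ω)) inferInstance)] pre := ⟨N, hN, rfl⟩
    have h3 : ∫ ω in pre, (P[S|(MeasurableSpace.comap (fun ω => ψ (X ω)) inferInstance)]) ω ∂P = 0 := by
      rw [setIntegral_condExp hmVle hSint hmpreV]; exact h2
    have hnn : 0 ≤ᵐ[P.restrict pre] (P[S|(MeasurableSpace.comap (fun ω => ψ (X ω)) inferInstance)]) :=
      ae_restrict_of_ae (hsel.mono fun ω h => le_of_lt h)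
    have hpos' : 0 < ∫ ω in pre, (P[S|(MeasurableSpace.comap (fun ω => ψ (X ω)) inferInstance)]) ω ∂P := by
      have hsupp : P (Function.support (P[S|(MeasurableSpace.comap (fun ω => ψ (X ω)) inferInstance)]))ᶜ = 0 := by
        have h4 := ae_iff.mp (hsel.mono fun ω h => (ne_of_gt h : (P[S|(MeasurableSpace.comap (fun ω => ψ (X ω)) inferInstance)]) ω ≠ 0))
        have h5 : (Function.support (P[S|(MeasurableSpace.comap (fun ω => ψ (X ω)) inferInstance)]))ᶜ = {ω | ¬ (P[S|(MeasurableSpace.comap (fun ω => ψ (X ω)) inferInstance)]) ω ≠ 0} := by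
          ext ω; simp [Function.mem_support]
        rw [h5]; exact h4
      have h6 : P (Function.support (P[S|(MeasurableSpace.comap (fun ω => ψ (X ω)) inferInstance)]) ∩ pre) = P pre := by
        rw [Set.inter_comm]; exact measure_inter_conull hsupp
      rw [setIntegral_pos_iff_support_of_nonneg_ae hnn integrable_condExp.integrableOn, h6]
      exact pos_iff_ne_zero.mpr hpre0
    rw [h3] at hpos'
    exact lt_irrefl 0 hpos'
  -- transfer of a.e. properties of V from Q1 to P
  have haeP : ∀ (p : 𝒱 → Prop), MeasurableSet {v | p v} → (∀ᵐ ω ∂Q1, p (ψ (X ω))) →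
      ∀ᵐ ω ∂P, p (ψ (X ω)) := by
    intro p hp h
    have h0 : Q1 ((fun ω => ψ (X ω)) ⁻¹' {v | p v}ᶜ) = 0 := ae_iff.mp h
    exact ae_iff.mpr (htransfer {v | p v}ᶜ hp.compl h0)
  -- transfer of a.e. properties from P to Q0
  have haeQ0 : ∀ {p : Ω → Prop}, (∀ᵐ ω ∂P, p ω) → (∀ᵐ ω ∂Q0, p ω) := by
    intro p h
    exact h.filter_mono cond_absolutelyContinuous.ae_le
  -- relation between Qa and Q1
  have hQaQ1 : Qa = Q1[|A ⁻¹' {a}] := (cond_cond_eq_cond_inter hmB1 hmBa P).symm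
  -- the indicator of treatment a
  set Ind : Ω → ℝ := (A ⁻¹' {a}).indicator (fun _ => 1) with hInddef
  have hIndbin : ∀ ω, Ind ω = 0 ∨ Ind ω = 1 := by
    intro ω
    by_cases h : ω ∈ A ⁻¹' {a}
    · right; simp [hInddef, Set.indicator_of_mem h]
    · left; simp [hInddef, Set.indicator_of_notMem h]
  have hIndm : Measurable Ind := measurable_const.indicator hmBa
  have hIndint : Integrable Ind Q1 :=
    hbint Q1 inferInstance Ind hIndm (Filter.Eventually.of_forall (habs hIndbin))
  have hAint : Integrable A Q1 :=
    hbint Q1 inferInstance A hA (Filter.Eventually.of_forall (habs hAbin))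
  set pa := Q1[Ind|(MeasurableSpace.comap X inferInstance)] with hpadef
  -- positivity of pa
  have hpa_pos : ∀ᵐ ω ∂Q1, 0 < pa ω := by
    rcases ha with h | h
    · -- a = 0 : Ind = 1 - A
      have hInd : Ind = (fun _ => (1 : ℝ)) - A := by
        funext ω
        rcases hAbin ω with h' | h'
        · have hω : ω ∈ A ⁻¹' {a} := by simp [Set.mem_preimage, h', h]
          simp [hInddef, Set.indicator_of_mem hω, h']
        · have hω : ω ∉ A ⁻¹' {a} := by simp [Set.mem_preimage, h', h]
          simp [hInddef, Set.indicator_of_notMem hω, h']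
      have h1 : pa =ᵐ[Q1] fun ω => 1 - pi (X ω) := by
        rw [hpadef, hInd]
        calc Q1[(fun _ => (1:ℝ)) - A|(MeasurableSpace.comap X inferInstance)]
            =ᵐ[Q1] Q1[fun _ => (1:ℝ)|(MeasurableSpace.comap X inferInstance)] - Q1[A|(MeasurableSpace.comap X inferInstance)] := condExp_sub (integrable_const 1) hAint _
          _ =ᵐ[Q1] fun ω => 1 - pi (X ω) := by
              rw [condExp_const hX.comap_le]
              filter_upwards [hpiver] with ω hω
              simp [← hω]
      filter_upwards [h1, hpos] with ω h1 h2
      rw [h1]; simp only [sub_pos]; exact h2.2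
    · -- a = 1 : Ind = A
      have hInd : Ind = A := by
        funext ω
        rcases hAbin ω with h' | h'
        · have hω : ω ∉ A ⁻¹' {a} := by simp [Set.mem_preimage, h', h]
          simp [hInddef, Set.indicator_of_notMem hω, h']
        · have hω : ω ∈ A ⁻¹' {a} := by simp [Set.mem_preimage, h', h]
          simp [hInddef, Set.indicator_of_mem hω, h']
      have h1 : pa =ᵐ[Q1] fun ω => pi (X ω) := by
        rw [hpadef, hInd]; exact hpiver.symm
      filter_upwards [h1, hpos] with ω h1 h2
      rw [h1]; exact h2.1
  -- Q1 (A ⁻¹' {a}) is not zero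
  have hQ1Ba : Q1 (A ⁻¹' {a}) ≠ 0 := by
    intro h0
    have hnotin : ∀ᵐ ω ∂Q1, ω ∉ A ⁻¹' {a} := by
      rw [ae_iff]; simp only [not_not]; exact h0
    have hInd0 : Ind =ᵐ[Q1] 0 := hnotin.mono fun ω h => by
      simp [hInddef, Set.indicator_of_notMem h]
    have hpa0 : pa =ᵐ[Q1] 0 := by
      rw [hpadef]
      calc Q1[Ind|(MeasurableSpace.comap X inferInstance)] =ᵐ[Q1] Q1[(0 : Ω → ℝ)|(MeasurableSpace.comap X inferInstance)] := condExp_congr_ae hInd0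
        _ = 0 := condExp_zero
    obtain ⟨ω, h1, h2⟩ := (hpa_pos.and hpa0).exists
    simp only [h2, Pi.zero_apply, lt_self_iff_false] at h1
  have hPBaNe : P (S ⁻¹' {1} ∩ A ⁻¹' {a}) ≠ 0 := by
    intro h
    apply hQ1Ba
    rw [hQ1def, cond_apply hmB1, h, mul_zero]
  haveI : IsProbabilityMeasure Qa := by
    rw [hQadef]; exact cond_isProbabilityMeasure hPBaNe
  -- a.e. transfer from Qa to Q1
  have haeQa : ∀ (p : Ω → Prop), (∀ᵐ ω ∂Qa, p ω) → (∀ᵐ ω ∂Q1, ω ∈ A ⁻¹' {a} → p ω) := by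
    intro p h
    rw [hQaQ1] at h
    rw [show Q1[|A ⁻¹' {a}] = (Q1 (A ⁻¹' {a}))⁻¹ • Q1.restrict (A ⁻¹' {a}) from rfl] at h
    rw [ae_iff, Measure.smul_apply, smul_eq_mul, mul_eq_zero] at h
    exact (ae_restrict_iff' hmBa).mp (ae_iff.mpr (h.resolve_left (ENNReal.inv_ne_zero.mpr (measure_ne_top _ _))))
  -- Qa lives on S⁻¹{1} ∩ A⁻¹{a}
  have hQa_mem : ∀ᵐ ω ∂Qa, ω ∈ S ⁻¹' {1} ∩ A ⁻¹' {a} := by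
    rw [ae_iff, hQadef, cond_apply (hmB1.inter hmBa)]
    have he : (S ⁻¹' {1} ∩ A ⁻¹' {a}) ∩ {ω | ¬ ω ∈ S ⁻¹' {1} ∩ A ⁻¹' {a}} = ∅ := by
      ext ω
      simp only [Set.mem_inter_iff, Set.mem_setOf_eq, Set.mem_empty_iff_false, iff_false]
      tauto
    rw [he]; simp
  -- SUTVA: Y = Ya a.e. under Qa
  have hYYa : Y =ᵐ[Qa] Ya := by
    filter_upwards [hQa_mem] with ω hω
    have hS1 : S ω = 1 := hω.1
    have hAa : A ω = a := hω.2
    rcases ha with h | h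
    · rw [hYa0 h]; exact (hSUTVA ω hS1).2 (by rw [hAa, h])
    · rw [hYa1 h]; exact (hSUTVA ω hS1).1 (by rw [hAa, h])
  have hYaint : ∀ (μ : Measure Ω), IsFiniteMeasure μ → Integrable Ya μ := fun μ h =>
    hbint μ h Ya hYam (Filter.Eventually.of_forall (habs hYabin))
  have hYa_nonneg : ∀ (μ : Measure Ω), (0 : Ω → ℝ) ≤ᵐ[μ] Ya := fun μ =>
    Filter.Eventually.of_forall fun ω => by rcases hYabin ω with h | h <;> simp [h]
  have hYa_le_one : ∀ (μ : Measure Ω), Ya ≤ᵐ[μ] fun _ => (1 : ℝ) := fun μ =>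
    Filter.Eventually.of_forall fun ω => by rcases hYabin ω with h | h <;> simp [h]
  -- conditional expectation of Ya is within [0,1]
  have hceQa : ∀ᵐ ω ∂Qa, 0 ≤ (Qa[Ya|(MeasurableSpace.comap X inferInstance)]) ω ∧ (Qa[Ya|(MeasurableSpace.comap X inferInstance)]) ω ≤ 1 := by
    have h1 : (0 : Ω → ℝ) ≤ᵐ[Qa] Qa[Ya|(MeasurableSpace.comap X inferInstance)] := condExp_nonneg (hYa_nonneg Qa)
    have h2 : Qa[Ya|(MeasurableSpace.comap X inferInstance)] ≤ᵐ[Qa] Qa[(fun _ => (1:ℝ))|(MeasurableSpace.comap X inferInstance)] :=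
      condExp_mono (hYaint Qa inferInstance) (integrable_const 1) (hYa_le_one Qa)
    rw [condExp_const hX.comap_le] at h2
    filter_upwards [h1, h2] with ω hu hv
    exact ⟨hu, hv⟩
  -- mu (X ·) is a.e. bounded under Qa
  have hmuYaQa : (fun ω => mu (X ω)) =ᵐ[Qa] Qa[Ya|(MeasurableSpace.comap X inferInstance)] := hmuver.trans (condExp_congr_ae hYYa)
  have hmu_bddQa : ∀ᵐ ω ∂Qa, |mu (X ω)| ≤ 1 := by
    filter_upwards [hmuYaQa, hceQa] with ω h1 h2
    rw [h1, abs_le]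
    exact ⟨by linarith [h2.1], h2.2⟩
  have hmuInd_bdd : ∀ᵐ ω ∂Q1, |mu (X ω) * Ind ω| ≤ 1 := by
    filter_upwards [haeQa _ hmu_bddQa] with ω hω
    by_cases h : ω ∈ A ⁻¹' {a}
    · simp only [hInddef, Set.indicator_of_mem h, mul_one]; exact hω h
    · simp [hInddef, Set.indicator_of_notMem h]
  have hmuIndint : Integrable (fun ω => mu (X ω) * Ind ω) Q1 :=
    hbint Q1 inferInstance _ ((hmu.comp hX).mul hIndm) hmuInd_bdd
  -- mu (X ·) is strongly measurable w.r.t. the comap σ-algebra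
  have hXmX : Measurable[(MeasurableSpace.comap X inferInstance)] X := fun s hs => ⟨s, hs, rfl⟩
  have hmuX_sm : StronglyMeasurable[(MeasurableSpace.comap X inferInstance)] (fun ω => mu (X ω)) :=
    (hmu.comp hXmX).stronglyMeasurable
  -- pull-out property
  have hpull : Q1[(fun ω => mu (X ω) * Ind ω)|(MeasurableSpace.comap X inferInstance)] =ᵐ[Q1] fun ω => mu (X ω) * pa ω := by
    have h := condExp_mul_of_stronglyMeasurable_left (μ := Q1) hmuX_sm
      (g := Ind) hmuIndint hIndint
    exact h
  -- set integral conversion between Q1 and Qa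
  have hcne : (Q1 (A ⁻¹' {a})).toReal ≠ 0 :=
    ENNReal.toReal_ne_zero.mpr ⟨hQ1Ba, measure_ne_top _ _⟩
  have hsetint : ∀ (f : Ω → ℝ) (s : Set Ω), MeasurableSet s →
      ∫ ω in s, f ω * Ind ω ∂Q1 = (Q1 (A ⁻¹' {a})).toReal * ∫ ω in s, f ω ∂Qa := by
    intro f s hs
    have h1 : ∫ ω in s, f ω * Ind ω ∂Q1 = ∫ ω in s ∩ A ⁻¹' {a}, f ω ∂Q1 := by
      have he : (fun ω => f ω * Ind ω) = (A ⁻¹' {a}).indicator f := by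
        funext ω
        by_cases h : ω ∈ A ⁻¹' {a}
        · simp [hInddef, Set.indicator_of_mem h]
        · simp [hInddef, Set.indicator_of_notMem h]
      rw [he, setIntegral_indicator hmBa]
    have h2 : ∫ ω in s, f ω ∂Qa = ((Q1 (A ⁻¹' {a})).toReal)⁻¹ * ∫ ω in s ∩ A ⁻¹' {a}, f ω ∂Q1 := by
      rw [hQaQ1, show Q1[|A ⁻¹' {a}] = (Q1 (A ⁻¹' {a}))⁻¹ • Q1.restrict (A ⁻¹' {a}) from rfl,
        Measure.restrict_smul, integral_smul_measure, Measure.restrict_restrict hs,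
        ENNReal.toReal_inv, smul_eq_mul]
    rw [h1, h2, ← mul_assoc, mul_inv_cancel₀ hcne, one_mul]
  have hYintQa : Integrable Y Qa := (hYaint Qa inferInstance).congr hYYa.symm
  -- the key set-integral identity
  have hkey : ∀ s, MeasurableSet[(MeasurableSpace.comap X inferInstance)] s →
      ∫ ω in s, mu (X ω) * Ind ω ∂Q1 = ∫ ω in s, Ya ω * Ind ω ∂Q1 := by
    intro s hs
    have hsΩ : MeasurableSet s := hX.comap_le s hs
    rw [hsetint _ s hsΩ, hsetint _ s hsΩ]
    congr 1
    calc ∫ ω in s, mu (X ω) ∂Qa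
        = ∫ ω in s, (Qa[Y|(MeasurableSpace.comap X inferInstance)]) ω ∂Qa :=
          setIntegral_congr_ae hsΩ (hmuver.mono fun ω h _ => h)
      _ = ∫ ω in s, Y ω ∂Qa := setIntegral_condExp hX.comap_le hYintQa hs
      _ = ∫ ω in s, Ya ω ∂Qa := setIntegral_congr_ae hsΩ (hYYa.mono fun ω h _ => h)
  have hYaIndint : Integrable (fun ω => Ya ω * Ind ω) Q1 := by
    refine hbint Q1 inferInstance _ (hYam.mul hIndm) (Filter.Eventually.of_forall fun ω => ?_)
    rcases hYabin ω with h | h <;> rcases hIndbin ω with h' | h' <;> simp [h, h']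
  -- characterize mu (X ·) * pa as a conditional expectation
  have hg_eq_ce : (fun ω => mu (X ω) * pa ω) =ᵐ[Q1] Q1[(fun ω => Ya ω * Ind ω)|(MeasurableSpace.comap X inferInstance)] := by
    refine ae_eq_condExp_of_forall_setIntegral_eq hX.comap_le hYaIndint
      (fun s hs hμs => ?_) (fun s hs hμs => ?_) ?_
    · exact (integrable_condExp.congr hpull).integrableOn
    · have hsΩ : MeasurableSet s := hX.comap_le s hs
      calc ∫ ω in s, mu (X ω) * pa ω ∂Q1
          = ∫ ω in s, (Q1[(fun ω => mu (X ω) * Ind ω)|(MeasurableSpace.comap X inferInstance)]) ω ∂Q1 :=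
            setIntegral_congr_ae hsΩ (hpull.mono fun ω h _ => h.symm)
        _ = ∫ ω in s, mu (X ω) * Ind ω ∂Q1 := setIntegral_condExp hX.comap_le hmuIndint hs
        _ = ∫ ω in s, Ya ω * Ind ω ∂Q1 := hkey s hs
    · exact (hmuX_sm.mul stronglyMeasurable_condExp).aestronglyMeasurable
  -- conditional independence factorization
  have hYaInd_fact : Q1[(fun ω => Ya ω * Ind ω)|(MeasurableSpace.comap X inferInstance)] =ᵐ[Q1]
      fun ω => (Q1[Ya|(MeasurableSpace.comap X inferInstance)]) ω * pa ω := by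
    have hprod : Measurable (fun ω => (Y0 ω, Y1 ω)) := hY0.prodMk hY1
    have e2 : ∀ (W : Ω → ℝ), (∀ ω, W ω = 0 ∨ W ω = 1) →
        (W ⁻¹' {1}).indicator (fun _ => (1:ℝ)) = W := by
      intro W hW
      funext ω
      rcases hW ω with h1 | h1
      · have hω : ω ∉ W ⁻¹' {1} := by simp [Set.mem_preimage, h1]
        simp [Set.indicator_of_notMem hω, h1]
      · have hω : ω ∈ W ⁻¹' {1} := by simp [Set.mem_preimage, h1]
        simp [Set.indicator_of_mem hω, h1]
    have e1 : (Ya ⁻¹' {1} ∩ A ⁻¹' {a}).indicator (fun _ => (1:ℝ)) = fun ω => Ya ω * Ind ω := by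
      funext ω
      by_cases h1 : Ya ω = 1
      · by_cases h2 : ω ∈ A ⁻¹' {a}
        · have hω : ω ∈ Ya ⁻¹' {1} ∩ A ⁻¹' {a} := ⟨by simp [Set.mem_preimage, h1], h2⟩
          simp [Set.indicator_of_mem hω, hInddef, Set.indicator_of_mem h2, h1]
        · have hω : ω ∉ Ya ⁻¹' {1} ∩ A ⁻¹' {a} := fun hc => h2 hc.2
          simp [Set.indicator_of_notMem hω, hInddef, Set.indicator_of_notMem h2]
      · have h0 : Ya ω = 0 := (hYabin ω).resolve_right h1
        have hω : ω ∉ Ya ⁻¹' {1} ∩ A ⁻¹' {a} := fun hc => by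
          have := hc.1
          simp only [Set.mem_preimage, Set.mem_singleton_iff] at this
          exact h1 this
        simp [Set.indicator_of_notMem hω, h0]
    rcases ha with h | h
    · have key := (condIndepFun_iff_condExp_inter_preimage_eq_mul hprod hA).mp hIgn
        ((Prod.fst : ℝ × ℝ → ℝ) ⁻¹' {1}) {a}
        (measurable_fst (measurableSet_singleton 1)) (measurableSet_singleton a)
      have hset : (fun ω => (Y0 ω, Y1 ω)) ⁻¹' ((Prod.fst : ℝ × ℝ → ℝ) ⁻¹' {1}) = Ya ⁻¹' {1} := by
        rw [hYa0 h]; rfl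
      rw [hset] at key
      rw [e1, e2 Ya hYabin] at key
      exact key
    · have key := (condIndepFun_iff_condExp_inter_preimage_eq_mul hprod hA).mp hIgn
        ((Prod.snd : ℝ × ℝ → ℝ) ⁻¹' {1}) {a}
        (measurable_snd (measurableSet_singleton 1)) (measurableSet_singleton a)
      have hset : (fun ω => (Y0 ω, Y1 ω)) ⁻¹' ((Prod.snd : ℝ × ℝ → ℝ) ⁻¹' {1}) = Ya ⁻¹' {1} := by
        rw [hYa1 h]; rfl
      rw [hset] at key
      rw [e1, e2 Ya hYabin] at key
      exact key
  -- conclusion: mu (X ·) is a version of the conditional expectation of Ya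
  have hmu_ce : (fun ω => mu (X ω)) =ᵐ[Q1] Q1[Ya|(MeasurableSpace.comap X inferInstance)] := by
    filter_upwards [hg_eq_ce, hYaInd_fact, hpa_pos] with ω h1 h2 h3
    exact mul_right_cancel₀ (ne_of_gt h3) (h1.trans h2)
  -- tower property: rho = r1 a.e. Q1
  have hrho_eq : ∀ᵐ ω ∂Q1, rho (ψ (X ω)) = r1 (ψ (X ω)) := by
    have hc : Q1[(fun ω => mu (X ω))|(MeasurableSpace.comap (fun ω => ψ (X ω)) inferInstance)] =ᵐ[Q1] Q1[Ya|(MeasurableSpace.comap (fun ω => ψ (X ω)) inferInstance)] :=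
      (condExp_congr_ae hmu_ce).trans (condExp_condExp_of_le hmVX hX.comap_le)
    filter_upwards [hrhover, hc, hr1ver] with ω h1 h2 h3
    rw [h1, h2, h3]
  -- r1 ∈ [0,1] a.e. Q1
  have hr1bnd : ∀ᵐ ω ∂Q1, 0 ≤ r1 (ψ (X ω)) ∧ r1 (ψ (X ω)) ≤ 1 := by
    have h1 : (0 : Ω → ℝ) ≤ᵐ[Q1] Q1[Ya|(MeasurableSpace.comap (fun ω => ψ (X ω)) inferInstance)] := condExp_nonneg (hYa_nonneg Q1)
    have h2 : Q1[Ya|(MeasurableSpace.comap (fun ω => ψ (X ω)) inferInstance)] ≤ᵐ[Q1] Q1[(fun _ => (1:ℝ))|(MeasurableSpace.comap (fun ω => ψ (X ω)) inferInstance)] :=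
      condExp_mono (hYaint Q1 inferInstance) (integrable_const 1) (hYa_le_one Q1)
    rw [condExp_const hmVle] at h2
    filter_upwards [h1, h2, hr1ver] with ω hu hv h3
    rw [h3]
    exact ⟨hu, hv⟩
  -- transfers to P
  have hrho_eq_P : ∀ᵐ ω ∂P, rho (ψ (X ω)) = r1 (ψ (X ω)) :=
    haeP (fun v => rho v = r1 v) (measurableSet_eq_fun hrho hr1m) hrho_eq
  have hr1bnd_P : ∀ᵐ ω ∂P, 0 ≤ r1 (ψ (X ω)) ∧ r1 (ψ (X ω)) ≤ 1 :=
    haeP (fun v => 0 ≤ r1 v ∧ r1 v ≤ 1)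
      ((measurableSet_le measurable_const hr1m).inter (measurableSet_le hr1m measurable_const))
      hr1bnd
  have htiltP : ∀ᵐ ω ∂P, r0 (ψ (X ω)) * (1 - r1 (ψ (X ω))) =
      Real.exp γ * (r1 (ψ (X ω)) * (1 - r0 (ψ (X ω)))) := by
    have hmeas : MeasurableSet {v | r0 v * (1 - r1 v) = Real.exp γ * (r1 v * (1 - r0 v))} :=
      measurableSet_eq_fun (hr0m.mul (measurable_const.sub hr1m))
        (measurable_const.mul (hr1m.mul (measurable_const.sub hr0m)))
    exact (ae_map_iff (hψ.comp hX).aemeasurable hmeas).mp htilt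
  -- the identification formula, a.e. P
  have hformula : ∀ᵐ ω ∂P, r0 (ψ (X ω)) =
      Real.exp γ * rho (ψ (X ω)) / (Real.exp γ * rho (ψ (X ω)) + 1 - rho (ψ (X ω))) := by
    filter_upwards [htiltP, hrho_eq_P, hr1bnd_P] with ω ht he hb
    rw [he]
    have hd : 0 < Real.exp γ * r1 (ψ (X ω)) + 1 - r1 (ψ (X ω)) := by
      rcases eq_or_lt_of_le hb.1 with h0 | h0
      · rw [← h0]; norm_num
      · have := mul_pos (Real.exp_pos γ) h0
        have := hb.2
        linarith
    rw [eq_div_iff (ne_of_gt hd)]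
    linear_combination ht
  have hformula0 : ∀ᵐ ω ∂Q0, r0 (ψ (X ω)) =
      Real.exp γ * rho (ψ (X ω)) / (Real.exp γ * rho (ψ (X ω)) + 1 - rho (ψ (X ω))) :=
    haeQ0 hformula
  -- conclude
  calc ∫ ω, Ya ω ∂Q0
      = ∫ ω, (Q0[Ya|(MeasurableSpace.comap (fun ω => ψ (X ω)) inferInstance)]) ω ∂Q0 := (integral_condExp hmVle).symm
    _ = ∫ ω, r0 (ψ (X ω)) ∂Q0 := integral_congr_ae hr0ver.symm
    _ = ∫ ω, Real.exp γ * rho (ψ (X ω)) /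
        (Real.exp γ * rho (ψ (X ω)) + 1 - rho (ψ (X ω))) ∂Q0 := integral_congr_ae hformula0
end

section
/- Negative correlation of squared multinomial bootstrap weights (verification of condition (W3′) in the proof of Theorem B.2). Let n ≥ 1 and let W_i = #{k ≤ n : C_k = i} be the multinomial bootstrap weights. Then for all i ≠ j in {1,…,n}, Cov(W_i², W_j²) = E[W_i² W_j²] − E[W_i²]·E[W_j²] ≤ 0. -/
open MeasureTheory ProbabilityTheory

namespace MBWaux

variable {Ω : Type*} [MeasurableSpace Ω] {P : Measure Ω} [IsProbabilityMeasure P]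
variable {n : ℕ} {C : Fin n → Ω → Fin n}

/-- indicator of `C k = a` as a real function -/
noncomputable def ind (C : Fin n → Ω → Fin n) (k a : Fin n) (ω : Ω) : ℝ :=
  if C k ω = a then 1 else 0

lemma ind_meas (hCmeas : ∀ k, Measurable (C k)) (k a : Fin n) :
    Measurable (ind C k a) := by
  have : MeasurableSet {ω | C k ω = a} := (hCmeas k) (measurableSet_singleton a)
  exact Measurable.ite this measurable_const measurable_const

lemma ind_bdd (k a : Fin n) (ω : Ω) : ind C k a ω = 0 ∨ ind C k a ω = 1 := by
  unfold ind; split_ifs <;> simp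

/-- key independence computation -/
lemma integral_prod_ind (hCmeas : ∀ k, Measurable (C k))
    (hindep : iIndepFun C P)
    (hunif : ∀ k, ∀ i : Fin n, P (C k ⁻¹' {i}) = 1 / n)
    (S : Finset (Fin n)) (g : Fin n → Fin n) :
    ∫ ω, ∏ k ∈ S, ind C k (g k) ω ∂P = ((n : ℝ)⁻¹) ^ S.card := by
  have hset : MeasurableSet (⋂ k ∈ S, C k ⁻¹' ({g k} : Set (Fin n))) :=
    Finset.measurableSet_biInter S (fun k _ => (hCmeas k) (measurableSet_singleton _))
  have heq : ∀ ω, (∏ k ∈ S, ind C k (g k) ω)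
      = Set.indicator (⋂ k ∈ S, C k ⁻¹' ({g k} : Set (Fin n))) (fun _ => (1:ℝ)) ω := by
    intro ω
    unfold ind
    by_cases h : ∀ k ∈ S, C k ω = g k
    · rw [Finset.prod_congr rfl (fun k hk => if_pos (h k hk)), Finset.prod_const_one,
        Set.indicator_of_mem]
      simp only [Set.mem_iInter, Set.mem_preimage, Set.mem_singleton_iff]
      exact h
    · push_neg at h
      obtain ⟨k, hk, hne⟩ := h
      rw [Finset.prod_eq_zero hk (if_neg hne : (if C k ω = g k then (1:ℝ) else 0) = 0),
        Set.indicator_of_notMem]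
      simp only [Set.mem_iInter, Set.mem_preimage, Set.mem_singleton_iff]
      push_neg
      exact ⟨k, hk, hne⟩
  rw [integral_congr_ae (Filter.Eventually.of_forall heq), integral_indicator hset,
    setIntegral_const, smul_eq_mul, mul_one, Measure.real,
    hindep.measure_inter_preimage_eq_mul S (fun k _ => measurableSet_singleton _)]
  rw [Finset.prod_congr rfl (fun k _ => hunif k (g k)), Finset.prod_const, one_div,
    ENNReal.toReal_pow, ENNReal.toReal_inv, ENNReal.toReal_natCast]

lemma prod_pair_ind (k l a : Fin n) (ω : Ω) :
    ∏ x ∈ ({k, l} : Finset (Fin n)), ind C x a ω = ind C k a ω * ind C l a ω := by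
  by_cases h : k = l
  · subst h
    rw [Finset.pair_eq_singleton, Finset.prod_singleton]
    unfold ind; split_ifs <;> simp
  · rw [Finset.prod_pair h]

lemma pow_card_pair {α : Type*} [DecidableEq α] (q : ℝ) (a b : α) :
    q ^ ({a, b} : Finset α).card = if b = a then q else q ^ 2 := by
  by_cases h : a = b
  · subst h; rw [Finset.pair_eq_singleton, Finset.card_singleton, pow_one, if_pos rfl]
  · rw [Finset.card_pair h, if_neg (Ne.symm h)]


lemma integrable_ind4 (hCmeas : ∀ k, Measurable (C k)) (k l m p i j : Fin n) :
    Integrable (fun ω => ind C k i ω * ind C l i ω * (ind C m j ω * ind C p j ω)) P := by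
  have hmeas : Measurable fun ω => ind C k i ω * ind C l i ω * (ind C m j ω * ind C p j ω) :=
    ((ind_meas hCmeas k i).mul (ind_meas hCmeas l i)).mul
      ((ind_meas hCmeas m j).mul (ind_meas hCmeas p j))
  refine (integrable_const (1:ℝ)).mono' hmeas.aestronglyMeasurable
    (Filter.Eventually.of_forall fun ω => ?_)
  rcases ind_bdd (C := C) k i ω with h1 | h1 <;> rcases ind_bdd (C := C) l i ω with h2 | h2 <;>
    rcases ind_bdd (C := C) m j ω with h3 | h3 <;> rcases ind_bdd (C := C) p j ω with h4 | h4 <;>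
    simp [h1, h2, h3, h4]

lemma integral_term (hCmeas : ∀ k, Measurable (C k))
    (hindep : iIndepFun C P)
    (hunif : ∀ k, ∀ i : Fin n, P (C k ⁻¹' {i}) = 1 / n)
    {i j : Fin n} (hij : i ≠ j) (k l m p : Fin n) :
    ∫ ω, ind C k i ω * ind C l i ω * (ind C m j ω * ind C p j ω) ∂P
      = if k = m ∨ k = p ∨ l = m ∨ l = p then 0
        else ((n:ℝ)⁻¹) ^ (({k,l} : Finset (Fin n)).card + ({m,p} : Finset (Fin n)).card) := by
  split_ifs with hov
  · have hz : ∀ ω, ind C k i ω * ind C l i ω * (ind C m j ω * ind C p j ω) = 0 := by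
      intro ω
      unfold ind
      rcases hov with h | h | h | h <;> subst h <;>
        [by_cases hc : C k ω = i; by_cases hc : C k ω = i;
         by_cases hc : C l ω = i; by_cases hc : C l ω = i] <;>
        simp [hc, hij, (Ne.symm hij)] <;> intro h' <;> exact absurd (hc ▸ h') hij.symm
    rw [integral_congr_ae (Filter.Eventually.of_forall hz)]
    simp
  · push_neg at hov
    obtain ⟨hkm, hkp, hlm, hlp⟩ := hov
    have hdisj : Disjoint ({k, l} : Finset (Fin n)) {m, p} := by
      rw [Finset.disjoint_left]
      intro x hx hx'
      simp only [Finset.mem_insert, Finset.mem_singleton] at hx hx'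
      rcases hx with rfl | rfl <;> rcases hx' with rfl | rfl <;> tauto
    have heq : ∀ ω, ind C k i ω * ind C l i ω * (ind C m j ω * ind C p j ω)
        = ∏ x ∈ (({k, l} : Finset (Fin n)) ∪ {m, p}),
            ind C x (if x ∈ ({k, l} : Finset (Fin n)) then i else j) ω := by
      intro ω
      rw [Finset.prod_union hdisj]
      have h1 : (∏ x ∈ ({k, l} : Finset (Fin n)),
          ind C x (if x ∈ ({k, l} : Finset (Fin n)) then i else j) ω)
          = ∏ x ∈ ({k, l} : Finset (Fin n)), ind C x i ω :=
        Finset.prod_congr rfl (fun x hx => by rw [if_pos hx])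
      have h2 : (∏ x ∈ ({m, p} : Finset (Fin n)),
          ind C x (if x ∈ ({k, l} : Finset (Fin n)) then i else j) ω)
          = ∏ x ∈ ({m, p} : Finset (Fin n)), ind C x j ω :=
        Finset.prod_congr rfl (fun x hx =>
          by rw [if_neg (Finset.disjoint_right.1 hdisj hx)])
      rw [h1, h2, prod_pair_ind, prod_pair_ind]
    rw [integral_congr_ae (Filter.Eventually.of_forall heq),
      integral_prod_ind hCmeas hindep hunif,
      Finset.card_union_of_disjoint hdisj]

lemma sum_pair_c {α : Type*} [DecidableEq α] (T : Finset α) (q : ℝ) :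
    ∑ m ∈ T, ∑ p ∈ T, (if p = m then q else q ^ 2)
      = (T.card : ℝ) * ((T.card : ℝ) * q ^ 2 + (q - q ^ 2)) := by
  have inner : ∀ m ∈ T, (∑ p ∈ T, if p = m then q else q ^ 2)
      = (T.card : ℝ) * q ^ 2 + (q - q ^ 2) := by
    intro m hm
    have hpt : ∀ p, (if p = m then q else q ^ 2)
        = q ^ 2 + (if p = m then q - q ^ 2 else 0) := by
      intro p; split_ifs <;> ring
    rw [Finset.sum_congr rfl (fun p _ => hpt p), Finset.sum_add_distrib,
      Finset.sum_const, Finset.sum_ite_eq' T m (fun _ => q - q ^ 2), if_pos hm,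
      nsmul_eq_mul]
  rw [Finset.sum_congr rfl inner, Finset.sum_const, nsmul_eq_mul]


lemma expand2 {α : Type*} [Fintype α] (F : α → ℝ) :
    (∑ k, F k) ^ 2 = ∑ k, ∑ l, F k * F l := by
  rw [sq, Finset.sum_mul]
  simp only [Finset.mul_sum]

lemma expand4 {α : Type*} [Fintype α] (F G : α → ℝ) :
    (∑ k, F k) ^ 2 * (∑ k, G k) ^ 2
      = ∑ k, ∑ l, ∑ m, ∑ p, F k * F l * (G m * G p) := by
  rw [expand2 F, expand2 G]
  simp only [Finset.sum_mul]
  simp only [Finset.mul_sum]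

lemma sum_ite_diag {α : Type*} [Fintype α] [DecidableEq α] (k : α) (a b : ℝ) :
    (∑ l : α, if l = k then a else b) = (Fintype.card α : ℝ) * b + (a - b) := by
  have hpt : ∀ l : α, (if l = k then a else b) = b + (if l = k then a - b else 0) := by
    intro l; split_ifs <;> ring
  rw [Finset.sum_congr rfl (fun l _ => hpt l), Finset.sum_add_distrib, Finset.sum_const,
    Finset.sum_ite_eq' Finset.univ k (fun _ => a - b), if_pos (Finset.mem_univ k),
    nsmul_eq_mul, Finset.card_univ]

lemma integrable_ind2 (hCmeas : ∀ k, Measurable (C k)) (k l i : Fin n) :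
    Integrable (fun ω => ind C k i ω * ind C l i ω) P := by
  have hmeas : Measurable fun ω => ind C k i ω * ind C l i ω :=
    (ind_meas hCmeas k i).mul (ind_meas hCmeas l i)
  refine (integrable_const (1:ℝ)).mono' hmeas.aestronglyMeasurable
    (Filter.Eventually.of_forall fun ω => ?_)
  rcases ind_bdd (C := C) k i ω with h1 | h1 <;> rcases ind_bdd (C := C) l i ω with h2 | h2 <;>
    simp [h1, h2]

lemma integral_ind2 (hCmeas : ∀ k, Measurable (C k))
    (hindep : iIndepFun C P)
    (hunif : ∀ k, ∀ i : Fin n, P (C k ⁻¹' {i}) = 1 / n)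
    (k l i : Fin n) :
    ∫ ω, ind C k i ω * ind C l i ω ∂P = if l = k then (n:ℝ)⁻¹ else ((n:ℝ)⁻¹) ^ 2 := by
  have heq : ∀ ω, ind C k i ω * ind C l i ω
      = ∏ x ∈ ({k, l} : Finset (Fin n)), ind C x ((fun _ => i) x) ω := by
    intro ω; rw [prod_pair_ind]
  rw [integral_congr_ae (Filter.Eventually.of_forall heq),
    integral_prod_ind hCmeas hindep hunif, pow_card_pair]


lemma sum_restrict {α : Type*} [Fintype α] [DecidableEq α] (u : Finset α) (q : ℝ) :
    (∑ m : α, ∑ p : α, (if m ∈ u ∨ p ∈ u then 0 else if p = m then q else q ^ 2))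
      = ∑ m ∈ Finset.univ \ u, ∑ p ∈ Finset.univ \ u, (if p = m then q else q ^ 2) := by
  have h1 : (∑ m : α, ∑ p : α, (if m ∈ u ∨ p ∈ u then 0 else if p = m then q else q ^ 2))
      = ∑ m ∈ Finset.univ \ u, ∑ p : α,
          (if m ∈ u ∨ p ∈ u then 0 else if p = m then q else q ^ 2) := by
    refine (Finset.sum_subset (Finset.subset_univ _) fun x _ hx => ?_).symm
    have hxu : x ∈ u := by simpa [Finset.mem_sdiff] using hx
    exact Finset.sum_eq_zero fun p _ => if_pos (Or.inl hxu)
  rw [h1]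
  refine Finset.sum_congr rfl fun m hm => ?_
  have hmu : m ∉ u := (Finset.mem_sdiff.1 hm).2
  have h2 : (∑ p : α, (if m ∈ u ∨ p ∈ u then 0 else if p = m then q else q ^ 2))
      = ∑ p ∈ Finset.univ \ u, (if m ∈ u ∨ p ∈ u then 0 else if p = m then q else q ^ 2) := by
    refine (Finset.sum_subset (Finset.subset_univ _) fun x _ hx => ?_).symm
    exact if_pos (Or.inr (by simpa [Finset.mem_sdiff] using hx))
  rw [h2]
  refine Finset.sum_congr rfl fun p hp => if_neg ?_
  have hpu : p ∉ u := (Finset.mem_sdiff.1 hp).2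
  tauto

lemma final_arith (N : ℝ) (hN : 2 ≤ N) :
    N * (N * ((N⁻¹) ^ 2 * ((N - 2) * ((N - 2) * (N⁻¹) ^ 2 + (N⁻¹ - (N⁻¹) ^ 2))))
        + (N⁻¹ * ((N - 1) * ((N - 1) * (N⁻¹) ^ 2 + (N⁻¹ - (N⁻¹) ^ 2)))
          - (N⁻¹) ^ 2 * ((N - 2) * ((N - 2) * (N⁻¹) ^ 2 + (N⁻¹ - (N⁻¹) ^ 2)))))
      - (N * (N * (N⁻¹) ^ 2 + (N⁻¹ - (N⁻¹) ^ 2)))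
        * (N * (N * (N⁻¹) ^ 2 + (N⁻¹ - (N⁻¹) ^ 2))) ≤ 0 := by
  have hN0 : (0:ℝ) < N := by linarith
  have hne : N ≠ 0 := ne_of_gt hN0
  have key : N * (N * ((N⁻¹) ^ 2 * ((N - 2) * ((N - 2) * (N⁻¹) ^ 2 + (N⁻¹ - (N⁻¹) ^ 2))))
        + (N⁻¹ * ((N - 1) * ((N - 1) * (N⁻¹) ^ 2 + (N⁻¹ - (N⁻¹) ^ 2)))
          - (N⁻¹) ^ 2 * ((N - 2) * ((N - 2) * (N⁻¹) ^ 2 + (N⁻¹ - (N⁻¹) ^ 2)))))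
      - (N * (N * (N⁻¹) ^ 2 + (N⁻¹ - (N⁻¹) ^ 2)))
        * (N * (N * (N⁻¹) ^ 2 + (N⁻¹ - (N⁻¹) ^ 2)))
      = (-(9 * N ^ 3) + 14 * N ^ 2 - 6 * N) / N ^ 4 := by
    field_simp
    ring
  rw [key, div_nonpos_iff]
  refine Or.inr ⟨by nlinarith [mul_nonneg (le_of_lt hN0) (by linarith : (0:ℝ) ≤ N - 2)],
    by positivity⟩

end MBWaux

open MBWaux

/-- **Negative correlation of squared multinomial bootstrap weights** (condition (W3′) in the
proof of Theorem B.2): if `C_1, …, C_n` are i.i.d. uniform on `{1, …, n}` and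
`W_i = #{k : C_k = i}`, then for `i ≠ j`, `Cov(W_i², W_j²) ≤ 0`. -/
theorem multinomial_bootstrap_weight_squares_neg_corr
    {Ω : Type*} [MeasurableSpace Ω] (P : Measure Ω) [IsProbabilityMeasure P]
    (n : ℕ) (hn : 1 ≤ n) (C : Fin n → Ω → Fin n)
    (hCmeas : ∀ k, Measurable (C k))
    (hindep : iIndepFun C P)
    (hunif : ∀ k, ∀ i : Fin n, P (C k ⁻¹' {i}) = 1 / n)
    (i j : Fin n) (hij : i ≠ j) :
    (∫ ω, ((Finset.univ.filter (fun k => C k ω = i)).card : ℝ)^2 *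
          ((Finset.univ.filter (fun k => C k ω = j)).card : ℝ)^2 ∂P)
      - (∫ ω, ((Finset.univ.filter (fun k => C k ω = i)).card : ℝ)^2 ∂P) *
        (∫ ω, ((Finset.univ.filter (fun k => C k ω = j)).card : ℝ)^2 ∂P) ≤ 0 := by
  classical
  have hn2 : 2 ≤ n := by
    have h1 := i.isLt
    have h2 := j.isLt
    have hne : (i : ℕ) ≠ (j : ℕ) := fun hh => hij (Fin.ext hh)
    omega
  set q : ℝ := (n : ℝ)⁻¹ with hqdef
  set N : ℝ := (n : ℝ) with hNdef
  have hN2 : (2 : ℝ) ≤ N := by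
    rw [hNdef]; exact_mod_cast hn2
  -- counts as sums of indicators
  have hW : ∀ (a : Fin n) (ω : Ω),
      ((Finset.univ.filter (fun k => C k ω = a)).card : ℝ) = ∑ k, ind C k a ω := by
    intro a ω
    rw [Finset.card_filter]
    push_cast
    simp [ind]
  -- second moment of a single count
  have hI1 : ∀ a : Fin n,
      (∫ ω, ((Finset.univ.filter (fun k => C k ω = a)).card : ℝ)^2 ∂P)
        = N * (N * q ^ 2 + (q - q ^ 2)) := by
    intro a
    have h1 : ∀ ω, ((Finset.univ.filter (fun k => C k ω = a)).card : ℝ)^2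
        = ∑ k, ∑ l, ind C k a ω * ind C l a ω := by
      intro ω; rw [hW, expand2]
    rw [integral_congr_ae (Filter.Eventually.of_forall h1),
      integral_finset_sum _ (fun k _ =>
        integrable_finset_sum _ (fun l _ => integrable_ind2 hCmeas k l a)),
      Finset.sum_congr rfl (fun k _ =>
        integral_finset_sum _ (fun l _ => integrable_ind2 hCmeas k l a)),
      Finset.sum_congr rfl (fun k _ => Finset.sum_congr rfl (fun l _ =>
        integral_ind2 hCmeas hindep hunif k l a)),
      sum_pair_c Finset.univ q, Finset.card_univ, Fintype.card_fin]
  -- the mixed fourth moment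
  have hI2 :
      (∫ ω, ((Finset.univ.filter (fun k => C k ω = i)).card : ℝ)^2 *
            ((Finset.univ.filter (fun k => C k ω = j)).card : ℝ)^2 ∂P)
        = N * (N * (q ^ 2 * ((N - 2) * ((N - 2) * q ^ 2 + (q - q ^ 2))))
            + (q * ((N - 1) * ((N - 1) * q ^ 2 + (q - q ^ 2)))
              - q ^ 2 * ((N - 2) * ((N - 2) * q ^ 2 + (q - q ^ 2))))) := by
    have h1 : ∀ ω, ((Finset.univ.filter (fun k => C k ω = i)).card : ℝ)^2 *
        ((Finset.univ.filter (fun k => C k ω = j)).card : ℝ)^2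
        = ∑ k, ∑ l, ∑ m, ∑ p, ind C k i ω * ind C l i ω * (ind C m j ω * ind C p j ω) := by
      intro ω; rw [hW, hW, expand4]
    rw [integral_congr_ae (Filter.Eventually.of_forall h1)]
    rw [integral_finset_sum _ (fun k _ => integrable_finset_sum _ (fun l _ =>
        integrable_finset_sum _ (fun m _ => integrable_finset_sum _ (fun p _ =>
          integrable_ind4 hCmeas k l m p i j))))]
    rw [Finset.sum_congr rfl (fun k _ => integral_finset_sum _ (fun l _ =>
        integrable_finset_sum _ (fun m _ => integrable_finset_sum _ (fun p _ =>
          integrable_ind4 hCmeas k l m p i j))))]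
    rw [Finset.sum_congr rfl (fun k _ => Finset.sum_congr rfl (fun l _ =>
        integral_finset_sum _ (fun m _ => integrable_finset_sum _ (fun p _ =>
          integrable_ind4 hCmeas k l m p i j))))]
    rw [Finset.sum_congr rfl (fun k _ => Finset.sum_congr rfl (fun l _ =>
        Finset.sum_congr rfl (fun m _ => integral_finset_sum _ (fun p _ =>
          integrable_ind4 hCmeas k l m p i j))))]
    rw [Finset.sum_congr rfl (fun k _ => Finset.sum_congr rfl (fun l _ =>
        Finset.sum_congr rfl (fun m _ => Finset.sum_congr rfl (fun p _ =>
          integral_term hCmeas hindep hunif hij k l m p))))]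
    -- now a purely combinatorial quadruple sum
    have hVprod : ∀ k l m p : Fin n,
        (if k = m ∨ k = p ∨ l = m ∨ l = p then (0:ℝ)
          else ((n:ℝ)⁻¹) ^ (({k,l} : Finset (Fin n)).card + ({m,p} : Finset (Fin n)).card))
        = (if l = k then q else q ^ 2) *
            (if m ∈ ({k,l} : Finset (Fin n)) ∨ p ∈ ({k,l} : Finset (Fin n)) then 0
              else if p = m then q else q ^ 2) := by
      intro k l m p
      by_cases hov : k = m ∨ k = p ∨ l = m ∨ l = p
      · rw [if_pos hov]
        have hm : m ∈ ({k,l} : Finset (Fin n)) ∨ p ∈ ({k,l} : Finset (Fin n)) := by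
          simp only [Finset.mem_insert, Finset.mem_singleton]
          rcases hov with h | h | h | h <;> [exact Or.inl (Or.inl h.symm);
            exact Or.inr (Or.inl h.symm); exact Or.inl (Or.inr h.symm);
            exact Or.inr (Or.inr h.symm)]
        rw [if_pos hm, mul_zero]
      · rw [if_neg hov]
        push_neg at hov
        obtain ⟨hkm, hkp, hlm, hlp⟩ := hov
        have hm : ¬(m ∈ ({k,l} : Finset (Fin n)) ∨ p ∈ ({k,l} : Finset (Fin n))) := by
          simp only [Finset.mem_insert, Finset.mem_singleton]
          push_neg
          exact ⟨⟨Ne.symm hkm, Ne.symm hlm⟩, Ne.symm hkp, Ne.symm hlp⟩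
        rw [if_neg hm, pow_add, pow_card_pair, pow_card_pair]
    rw [Finset.sum_congr rfl (fun k _ => Finset.sum_congr rfl (fun l _ =>
        Finset.sum_congr rfl (fun m _ => Finset.sum_congr rfl (fun p _ =>
          hVprod k l m p))))]
    -- pull out the constant factor and restrict the inner sums
    have hinner : ∀ k l : Fin n,
        (∑ m, ∑ p, (if l = k then q else q ^ 2) *
            (if m ∈ ({k,l} : Finset (Fin n)) ∨ p ∈ ({k,l} : Finset (Fin n)) then (0:ℝ)
              else if p = m then q else q ^ 2))
        = if l = k then q * ((N - 1) * ((N - 1) * q ^ 2 + (q - q ^ 2)))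
          else q ^ 2 * ((N - 2) * ((N - 2) * q ^ 2 + (q - q ^ 2))) := by
      intro k l
      simp_rw [← Finset.mul_sum]
      rw [sum_restrict ({k,l} : Finset (Fin n)) q, sum_pair_c]
      have hcard : (Finset.univ \ ({k,l} : Finset (Fin n))).card
          = n - ({k,l} : Finset (Fin n)).card := by
        rw [Finset.card_sdiff_of_subset (Finset.subset_univ _), Finset.card_univ, Fintype.card_fin]
      by_cases hlk : l = k
      · subst hlk
        rw [if_pos rfl]
        have : ({l, l} : Finset (Fin n)).card = 1 := by
          rw [Finset.pair_eq_singleton, Finset.card_singleton]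
        rw [hcard, this]
        have hc : ((n - 1 : ℕ) : ℝ) = N - 1 := by
          rw [hNdef]; push_cast [Nat.cast_sub (by omega : 1 ≤ n)]; ring
        rw [hc, if_pos rfl]
      · rw [if_neg hlk]
        have : ({k, l} : Finset (Fin n)).card = 2 := Finset.card_pair (Ne.symm hlk)
        rw [hcard, this]
        have hc : ((n - 2 : ℕ) : ℝ) = N - 2 := by
          rw [hNdef]; push_cast [Nat.cast_sub hn2]; ring
        rw [hc, if_neg hlk]
    rw [Finset.sum_congr rfl (fun k _ => Finset.sum_congr rfl (fun l _ => hinner k l))]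
    rw [Finset.sum_congr rfl (fun k _ => sum_ite_diag k _ _)]
    rw [Finset.sum_const, Finset.card_univ, Fintype.card_fin, nsmul_eq_mul]
  rw [hI2, hI1 i, hI1 j]
  rw [hqdef]
  exact final_arith N hN2
end

section
/- Consistency of the outcome-regression plug-in estimator with deterministic nuisance sequences (consistency part of Theorem 1 in deterministic-nuisance form). Let ν be a probability measure on a standard Borel space 𝒱 (the law of the shared covariate V in the target population, i.e., under P(·|S=0)), let ρ : 𝒱 → [0,1] be measurable, and let γ ∈ ℝ. Let V_1, V_2, … be i.i.d. with law ν, and let g_n : 𝒱 → [0,1] be measurable functions with ∫ |g_n − ρ| dν → 0 as n → ∞. Then the plug-in estimator θ̂_n = (1/n) Σ_{i=1}^n T_γ(g_n(V_i)) converges in probability to θ(γ) = ∫ T_γ(ρ(v)) ν(dv), where T_γ(t) = e^γ t/(e^γ t + 1 − t). -/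
open MeasureTheory ProbabilityTheory Real Filter
open scoped ENNReal Topology

lemma tilt_denom_ge (γ : ℝ) {t : ℝ} (h0 : 0 ≤ t) (h1 : t ≤ 1) :
    min 1 (Real.exp γ) ≤ Real.exp γ * t + 1 - t := by
  rcases min_cases 1 (Real.exp γ) with ⟨h, h'⟩ | ⟨h, h'⟩ <;> nlinarith

lemma tilt_denom_pos (γ : ℝ) {t : ℝ} (h0 : 0 ≤ t) (h1 : t ≤ 1) :
    0 < Real.exp γ * t + 1 - t :=
  lt_of_lt_of_le (lt_min one_pos (Real.exp_pos γ)) (tilt_denom_ge γ h0 h1)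

lemma tilt_abs_le_one (γ : ℝ) {t : ℝ} (h0 : 0 ≤ t) (h1 : t ≤ 1) :
    |Real.exp γ * t / (Real.exp γ * t + 1 - t)| ≤ 1 := by
  have hd := tilt_denom_pos γ h0 h1
  rw [abs_of_nonneg (div_nonneg (by positivity) hd.le)]
  rw [div_le_one hd]
  nlinarith

lemma tilt_lip (γ : ℝ) {s t : ℝ} (hs0 : 0 ≤ s) (hs1 : s ≤ 1) (ht0 : 0 ≤ t) (ht1 : t ≤ 1) :
    |Real.exp γ * s / (Real.exp γ * s + 1 - s) - Real.exp γ * t / (Real.exp γ * t + 1 - t)|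
      ≤ (Real.exp γ / (min 1 (Real.exp γ))^2) * |s - t| := by
  have hds := tilt_denom_pos γ hs0 hs1
  have hdt := tilt_denom_pos γ ht0 ht1
  have hm : (0:ℝ) < min 1 (Real.exp γ) := lt_min one_pos (Real.exp_pos γ)
  have key : Real.exp γ * s / (Real.exp γ * s + 1 - s) - Real.exp γ * t / (Real.exp γ * t + 1 - t)
      = Real.exp γ * (s - t) / ((Real.exp γ * s + 1 - s) * (Real.exp γ * t + 1 - t)) := by
    field_simp
    ring
  rw [key, abs_div, abs_mul, abs_of_nonneg (Real.exp_pos γ).le,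
    abs_of_pos (mul_pos hds hdt)]
  rw [div_le_iff₀ (mul_pos hds hdt)]
  have h1 : min 1 (Real.exp γ) ^ 2 ≤ (Real.exp γ * s + 1 - s) * (Real.exp γ * t + 1 - t) := by
    have := tilt_denom_ge γ hs0 hs1
    have := tilt_denom_ge γ ht0 ht1
    nlinarith
  have h2 : Real.exp γ / (min 1 (Real.exp γ))^2 * |s - t| * ((Real.exp γ * s + 1 - s) * (Real.exp γ * t + 1 - t)) ≥ Real.exp γ / (min 1 (Real.exp γ))^2 * |s - t| * (min 1 (Real.exp γ))^2 := by
    have h3 : (0:ℝ) ≤ Real.exp γ / (min 1 (Real.exp γ))^2 * |s - t| := by positivity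
    exact mul_le_mul_of_nonneg_left h1 h3
  have h4 : Real.exp γ / (min 1 (Real.exp γ))^2 * |s - t| * (min 1 (Real.exp γ))^2 = Real.exp γ * |s - t| := by
    field_simp
  linarith [h2, h4 ▸ h2]

lemma tilt_measurable (γ : ℝ) :
    Measurable (fun t : ℝ => Real.exp γ * t / (Real.exp γ * t + 1 - t)) :=
  (measurable_const.mul measurable_id).div
    (((measurable_const.mul measurable_id).add_const 1).sub measurable_id)

/-- **Consistency of the outcome-regression plug-in estimator** with deterministic nuisance
sequences (consistency part of Theorem 1): if `V_1, V_2, …` are i.i.d. with law `ν` and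
`g_n → ρ` in `L¹(ν)`, then `θ̂_n = n⁻¹ Σ_{i<n} T_γ(g_n(V_i))` converges in probability to
`θ(γ) = ∫ T_γ(ρ) dν`, where `T_γ(t) = e^γ t/(e^γ t + 1 − t)` is the tilting map. -/
theorem OR_plugin_estimator_consistency
    {Ω' : Type*} [MeasurableSpace Ω'] (Q : Measure Ω') [IsProbabilityMeasure Q]
    {𝒱 : Type*} [MeasurableSpace 𝒱] [StandardBorelSpace 𝒱]
    (ν : Measure 𝒱) [IsProbabilityMeasure ν]
    (γ : ℝ)
    (rho : 𝒱 → ℝ) (hrho : Measurable rho) (hrhoRange : ∀ v, 0 ≤ rho v ∧ rho v ≤ 1)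
    -- i.i.d. sequence V_1, V_2, … with law ν
    (V : ℕ → Ω' → 𝒱) (hVmeas : ∀ i, Measurable (V i))
    (hViid : iIndepFun V Q)
    (hVlaw : ∀ i, Measure.map (V i) Q = ν)
    -- measurable estimated regressions g_n with values in [0,1], converging to ρ in L¹(ν)
    (g : ℕ → 𝒱 → ℝ) (hg : ∀ n, Measurable (g n))
    (hgRange : ∀ n v, 0 ≤ g n v ∧ g n v ≤ 1)
    (hgL1 : Tendsto (fun n => ∫ v, |g n v - rho v| ∂ν) atTop (𝓝 0)) :
    ∀ ε > (0:ℝ),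
      Tendsto (fun (n : ℕ) => Q {ω | ε <
          |(n : ℝ)⁻¹ * (∑ i ∈ Finset.range n,
              Real.exp γ * g n (V i ω) / (Real.exp γ * g n (V i ω) + 1 - g n (V i ω)))
            - ∫ v, Real.exp γ * rho v / (Real.exp γ * rho v + 1 - rho v) ∂ν|})
        atTop (𝓝 0) := by
  intro ε hε
  set T : ℝ → ℝ := fun t => Real.exp γ * t / (Real.exp γ * t + 1 - t) with hTdef
  have hTmeas : Measurable T := tilt_measurable γ
  set L : ℝ := Real.exp γ / (min 1 (Real.exp γ))^2 with hLdef
  have hm : (0:ℝ) < min 1 (Real.exp γ) := lt_min one_pos (Real.exp_pos γ)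
  have hLpos : 0 < L := by positivity
  -- the i.i.d. real sequence X i = T (ρ (V i))
  set X : ℕ → Ω' → ℝ := fun i ω => T (rho (V i ω)) with hXdef
  have hTrho_meas : Measurable (fun v => T (rho v)) := hTmeas.comp hrho
  have hXmeas : ∀ i, Measurable (X i) := fun i => hTrho_meas.comp (hVmeas i)
  have hmapX : ∀ i, Measure.map (X i) Q = Measure.map (fun v => T (rho v)) ν := by
    intro i
    have : X i = (fun v => T (rho v)) ∘ V i := rfl
    rw [this, ← Measure.map_map hTrho_meas (hVmeas i), hVlaw i]
  have hident : ∀ i, IdentDistrib (X i) (X 0) Q Q := fun i =>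
    ⟨(hXmeas i).aemeasurable, (hXmeas 0).aemeasurable, by rw [hmapX i, hmapX 0]⟩
  have hindep : Pairwise (Function.onFun (IndepFun · · Q) X) := fun i j hij =>
    (hViid.indepFun hij).comp hTrho_meas hTrho_meas
  have hXbd : ∀ i ω, |X i ω| ≤ 1 := fun i ω =>
    tilt_abs_le_one γ (hrhoRange _).1 (hrhoRange _).2
  have hint : Integrable (X 0) Q := by
    refine (integrable_const (1:ℝ)).mono' (hXmeas 0).aestronglyMeasurable ?_
    exact Eventually.of_forall fun ω => by simpa [Real.norm_eq_abs] using hXbd 0 ω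
  set θ₀ : ℝ := ∫ ω, X 0 ω ∂Q with hθ₀
  have hEX : ∫ v, T (rho v) ∂ν = θ₀ := by
    rw [hθ₀, ← hVlaw 0,
      integral_map (hVmeas 0).aemeasurable hTrho_meas.aestronglyMeasurable]
  -- strong law for X
  have hslln : ∀ᵐ ω ∂Q,
      Tendsto (fun n : ℕ => (∑ i ∈ Finset.range n, X i ω) / n) atTop (𝓝 θ₀) :=
    strong_law_ae_real X hint hindep hident
  set Sn : ℕ → Ω' → ℝ := fun n ω => (∑ i ∈ Finset.range n, X i ω) / n with hSndef
  have hSmeas : ∀ n, AEStronglyMeasurable (Sn n) Q := fun n =>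
    ((Finset.measurable_sum _ (fun i _ => hXmeas i)).div_const _).aestronglyMeasurable
  have hTIM : TendstoInMeasure Q Sn atTop (fun _ => θ₀) :=
    tendstoInMeasure_of_tendsto_ae hSmeas hslln
  have hB := tendstoInMeasure_iff_dist.mp hTIM (ε/2) (half_pos hε)
  -- the bias term
  set D : ℕ → Ω' → ℝ := fun n ω =>
    (n : ℝ)⁻¹ * ∑ i ∈ Finset.range n, (T (g n (V i ω)) - X i ω) with hDdef
  set c : ℕ → ℝ := fun n => ∫ v, |T (g n v) - T (rho v)| ∂ν with hcdef
  have hTg_bd : ∀ n v, |T (g n v)| ≤ 1 := fun n v =>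
    tilt_abs_le_one γ (hgRange n v).1 (hgRange n v).2
  have hTrho_bd : ∀ v, |T (rho v)| ≤ 1 := fun v =>
    tilt_abs_le_one γ (hrhoRange v).1 (hrhoRange v).2
  have habs_meas : ∀ n, Measurable (fun v => |T (g n v) - T (rho v)|) := fun n =>
    ((hTmeas.comp (hg n)).sub hTrho_meas).abs
  have habs_int : ∀ n, Integrable (fun v => |T (g n v) - T (rho v)|) ν := by
    intro n
    refine (integrable_const (2:ℝ)).mono' (habs_meas n).aestronglyMeasurable ?_
    refine Eventually.of_forall fun v => ?_
    rw [Real.norm_eq_abs, abs_abs]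
    calc |T (g n v) - T (rho v)| ≤ |T (g n v)| + |T (rho v)| := abs_sub _ _
      _ ≤ 2 := by linarith [hTg_bd n v, hTrho_bd v]
  have hgrho_int : ∀ n, Integrable (fun v => |g n v - rho v|) ν := by
    intro n
    refine (integrable_const (2:ℝ)).mono' ((hg n).sub hrho).abs.aestronglyMeasurable ?_
    refine Eventually.of_forall fun v => ?_
    rw [Real.norm_eq_abs, abs_abs]
    calc |g n v - rho v| ≤ |g n v| + |rho v| := abs_sub _ _
      _ ≤ 2 := by
        rw [abs_of_nonneg (hgRange n v).1, abs_of_nonneg (hrhoRange v).1]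
        linarith [(hgRange n v).2, (hrhoRange v).2]
  have hc : ∀ n, c n ≤ L * ∫ v, |g n v - rho v| ∂ν := by
    intro n
    rw [hcdef, ← integral_const_mul]
    refine integral_mono (habs_int n) ((hgrho_int n).const_mul L) fun v => ?_
    exact tilt_lip γ (hgRange n v).1 (hgRange n v).2 (hrhoRange v).1 (hrhoRange v).2
  have hterm_meas : ∀ n i, Measurable (fun ω => |T (g n (V i ω)) - X i ω|) := fun n i =>
    ((hTmeas.comp ((hg n).comp (hVmeas i))).sub (hXmeas i)).abs
  have hterm_int : ∀ n i, Integrable (fun ω => |T (g n (V i ω)) - X i ω|) Q := by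
    intro n i
    refine (integrable_const (2:ℝ)).mono' (hterm_meas n i).aestronglyMeasurable ?_
    refine Eventually.of_forall fun ω => ?_
    rw [Real.norm_eq_abs, abs_abs]
    calc |T (g n (V i ω)) - X i ω| ≤ |T (g n (V i ω))| + |X i ω| := abs_sub _ _
      _ ≤ 2 := by linarith [hTg_bd n (V i ω), hXbd i ω]
  have hterm_eq : ∀ n i, ∫ ω, |T (g n (V i ω)) - X i ω| ∂Q = c n := by
    intro n i
    show _ = ∫ v, |T (g n v) - T (rho v)| ∂ν
    rw [← hVlaw i,
      integral_map (hVmeas i).aemeasurable (habs_meas n).aestronglyMeasurable]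
  have hDabs_meas : ∀ n, Measurable (fun ω => |D n ω|) := fun n =>
    ((Finset.measurable_sum _ fun i _ =>
        (hTmeas.comp ((hg n).comp (hVmeas i))).sub (hXmeas i)).const_mul _).abs
  have hDabs_bd : ∀ n ω,
      |D n ω| ≤ (n : ℝ)⁻¹ * ∑ i ∈ Finset.range n, |T (g n (V i ω)) - X i ω| := by
    intro n ω
    rw [hDdef]
    calc |(n : ℝ)⁻¹ * ∑ i ∈ Finset.range n, (T (g n (V i ω)) - X i ω)|
        = (n : ℝ)⁻¹ * |∑ i ∈ Finset.range n, (T (g n (V i ω)) - X i ω)| := by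
          rw [abs_mul, abs_of_nonneg (by positivity : (0:ℝ) ≤ (n:ℝ)⁻¹)]
      _ ≤ (n : ℝ)⁻¹ * ∑ i ∈ Finset.range n, |T (g n (V i ω)) - X i ω| := by
          gcongr
          exact Finset.abs_sum_le_sum_abs _ _
  have hsum_int : ∀ n : ℕ, Integrable
      (fun ω => (n : ℝ)⁻¹ * ∑ i ∈ Finset.range n, |T (g n (V i ω)) - X i ω|) Q := fun n =>
    ((integrable_finset_sum _ fun i _ => hterm_int n i).const_mul _)
  have hDabs_int : ∀ n, Integrable (fun ω => |D n ω|) Q := by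
    intro n
    refine Integrable.mono' (hsum_int n) (hDabs_meas n).aestronglyMeasurable ?_
    refine Eventually.of_forall fun ω => ?_
    rw [Real.norm_eq_abs, abs_abs]
    exact hDabs_bd n ω
  have hDle : ∀ n, ∫ ω, |D n ω| ∂Q ≤ c n := by
    intro n
    have hcnn : 0 ≤ c n := integral_nonneg fun v => abs_nonneg _
    calc ∫ ω, |D n ω| ∂Q
        ≤ ∫ ω, (n : ℝ)⁻¹ * ∑ i ∈ Finset.range n, |T (g n (V i ω)) - X i ω| ∂Q :=
          integral_mono (hDabs_int n) (hsum_int n) (hDabs_bd n)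
      _ = (n : ℝ)⁻¹ * ∑ i ∈ Finset.range n, ∫ ω, |T (g n (V i ω)) - X i ω| ∂Q := by
          rw [integral_const_mul, integral_finset_sum _ fun i _ => hterm_int n i]
      _ = (n : ℝ)⁻¹ * (n * c n) := by
          simp only [hterm_eq n, Finset.sum_const, Finset.card_range, nsmul_eq_mul]
      _ ≤ c n := by
          rcases eq_or_ne n 0 with h | h
          · subst h; simpa using hcnn
          · rw [← mul_assoc, inv_mul_cancel₀ (by exact_mod_cast h), one_mul]
  -- Markov bound for the bias term
  have hMarkov : ∀ n, Q {ω | ε/2 < |D n ω|}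
      ≤ ENNReal.ofReal ((ε/2)⁻¹ * (L * ∫ v, |g n v - rho v| ∂ν)) := by
    intro n
    have hmar := mul_meas_ge_le_integral_of_nonneg (μ := Q) (f := fun ω => |D n ω|)
      (Eventually.of_forall fun ω => abs_nonneg _) (hDabs_int n) (ε/2)
    have hεpos : (0:ℝ) < ε/2 := half_pos hε
    calc Q {ω | ε/2 < |D n ω|} ≤ Q {ω | ε/2 ≤ |D n ω|} :=
          measure_mono (Set.setOf_subset_setOf.mpr fun ω h => le_of_lt h)
      _ = ENNReal.ofReal (Q {ω | ε/2 ≤ |D n ω|}).toReal :=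
          (ENNReal.ofReal_toReal (measure_ne_top Q _)).symm
      _ ≤ ENNReal.ofReal ((ε/2)⁻¹ * (L * ∫ v, |g n v - rho v| ∂ν)) := by
          refine ENNReal.ofReal_le_ofReal ?_
          rw [← le_div_iff₀' hεpos] at hmar
          calc (Q {ω | ε/2 ≤ |D n ω|}).toReal ≤ (∫ ω, |D n ω| ∂Q) / (ε/2) := hmar
            _ = (ε/2)⁻¹ * ∫ ω, |D n ω| ∂Q := by rw [div_eq_inv_mul]
            _ ≤ (ε/2)⁻¹ * (L * ∫ v, |g n v - rho v| ∂ν) := by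
                refine mul_le_mul_of_nonneg_left ?_ (by positivity)
                exact (hDle n).trans (hc n)
  -- decomposition and combination
  set b : ℕ → ℝ≥0∞ := fun n =>
    ENNReal.ofReal ((ε/2)⁻¹ * (L * ∫ v, |g n v - rho v| ∂ν))
      + Q {ω | ε/2 ≤ dist (Sn n ω) θ₀} with hbdef
  have hble : ∀ n : ℕ, Q {ω | ε <
      |(n : ℝ)⁻¹ * (∑ i ∈ Finset.range n, T (g n (V i ω))) - ∫ v, T (rho v) ∂ν|} ≤ b n := by
    intro n
    have hsub : {ω | ε <
        |(n : ℝ)⁻¹ * (∑ i ∈ Finset.range n, T (g n (V i ω))) - ∫ v, T (rho v) ∂ν|}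
        ⊆ {ω | ε/2 < |D n ω|} ∪ {ω | ε/2 ≤ dist (Sn n ω) θ₀} := by
      intro ω hω
      simp only [Set.mem_setOf_eq] at hω
      by_contra hcon
      simp only [Set.mem_union, Set.mem_setOf_eq, not_or, not_lt, not_le] at hcon
      obtain ⟨h1, h2⟩ := hcon
      have hdec : (n : ℝ)⁻¹ * (∑ i ∈ Finset.range n, T (g n (V i ω))) - ∫ v, T (rho v) ∂ν
          = D n ω + (Sn n ω - θ₀) := by
        rw [hEX, hDdef, hSndef]
        simp only [Finset.sum_sub_distrib]
        field_simp
        ring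
      rw [hdec] at hω
      have : |D n ω + (Sn n ω - θ₀)| ≤ |D n ω| + |Sn n ω - θ₀| := abs_add_le _ _
      rw [Real.dist_eq] at h2
      linarith
    calc Q _ ≤ Q ({ω | ε/2 < |D n ω|} ∪ {ω | ε/2 ≤ dist (Sn n ω) θ₀}) := measure_mono hsub
      _ ≤ Q {ω | ε/2 < |D n ω|} + Q {ω | ε/2 ≤ dist (Sn n ω) θ₀} := measure_union_le _ _
      _ ≤ b n := by rw [hbdef]; exact add_le_add_left (hMarkov n) _
  have hb0 : Tendsto b atTop (𝓝 0) := by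
    have h1 : Tendsto (fun n => (ε/2)⁻¹ * (L * ∫ v, |g n v - rho v| ∂ν)) atTop (𝓝 0) := by
      rw [show (0:ℝ) = (ε/2)⁻¹ * (L * 0) by ring]
      exact (hgL1.const_mul L).const_mul _
    have h2 : Tendsto (fun n => ENNReal.ofReal ((ε/2)⁻¹ * (L * ∫ v, |g n v - rho v| ∂ν)))
        atTop (𝓝 0) := by
      have := ENNReal.tendsto_ofReal h1
      rwa [ENNReal.ofReal_zero] at this
    have h3 := h2.add hB
    rw [add_zero] at h3
    exact h3
  have hfinal : Tendsto (fun n : ℕ => Q {ω | ε <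
      |(n : ℝ)⁻¹ * (∑ i ∈ Finset.range n, T (g n (V i ω))) - ∫ v, T (rho v) ∂ν|})
      atTop (𝓝 0) :=
    tendsto_of_tendsto_of_tendsto_of_le_of_le tendsto_const_nhds hb0
      (fun n => zero_le) hble
  exact hfinal
end
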